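/- For s ∈ (0,1), define f(x₁,x₂,y) = x₁² + x₂² + y(y-1) - (1/4)|y-x₁+x₂|^{s-1}(x₁+y-1) - (1/4)|y+x₁-x₂|^{s-1}(x₂+y-1) - (1/4)|y+x₁+x₂|^{s-1}(-x₁-x₂+2(y-1)) near (0,0,1). Then f and its gradient vanish at (0,0,1), and the Hessian there has entries f_{x₁x₁} = f_{x₂x₂} = 1+s, f_{yy} = 4-2s, f_{x₁x₂} = 0, f_{x₁y} = f_{x₂y} = -(s-1)/2, which is positive definite; hence (0,0,1) is a strict local minimum of f. -/

import Mathlib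

open Real Set Filter
open Real Set Filter

lemma aux_rpow (q a b : ℝ) {x : ℝ} (h : 0 < a + b * x) :
    HasDerivAt (fun t : ℝ => (a + b * t) ^ q) (b * q * (a + b * x) ^ (q - 1)) x := by
  have h1 : HasDerivAt (fun t : ℝ => a + b * t) b x := by
    simpa using (hasDerivAt_id x).const_mul b |>.const_add a
  exact h1.rpow_const (Or.inl h.ne')

set_option maxHeartbeats 1000000 in
lemma key_taylor {s t : ℝ} (hs0 : 0 < s) (hs1 : s < 1) (ht1 : 1/2 ≤ t) (ht2 : t ≤ 3/2) :
    |t ^ (s-1) - 1 - (s-1)*(t-1)| ≤ 8*(t-1)^2 := by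
  have ht : (0:ℝ) < t := by linarith
  set L := Real.log t with hLdef
  have hL1 : L ≤ t - 1 := Real.log_le_sub_one_of_pos ht
  have hL2 : t - 1 - 2*(t-1)^2 ≤ L := by
    have h := Real.log_le_sub_one_of_pos (x := t⁻¹) (by positivity)
    rw [Real.log_inv] at h
    have h2 : 1 - t⁻¹ ≤ L := by linarith
    have h3 : (t-1)/t = 1 - t⁻¹ := by field_simp
    have h4 : (t-1)/t ≤ L := by rw [h3]; exact h2
    rw [div_le_iff₀ ht] at h4
    nlinarith [mul_nonneg (sq_nonneg (t-1)) (by linarith : (0:ℝ) ≤ 2*t-1)]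
  have hd1 : 0 ≤ (t-1) - L := by linarith
  have hd2 : (t-1) - L ≤ 2*(t-1)^2 := by linarith
  have htsq : (t-1)^2 ≤ 1/4 := by nlinarith
  have hLsq : L^2 ≤ 4*(t-1)^2 := by
    nlinarith [mul_nonneg hd1 (by linarith : 0 ≤ L - (t-1) + 2*(t-1)^2), sq_nonneg (t-1),
      sq_nonneg (L - (t-1)), mul_le_mul hd2 hd2 hd1 (by positivity : (0:ℝ) ≤ 2*(t-1)^2)]
  have hLabs : |L| ≤ 1 := by
    rw [abs_le]; constructor <;> nlinarith
  have hxabs : |L * (s-1)| ≤ 1 := by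
    rw [abs_mul]
    have : |s-1| ≤ 1 := by rw [abs_le]; constructor <;> linarith
    calc |L| * |s-1| ≤ 1 * 1 := by
          exact mul_le_mul hLabs this (abs_nonneg _) zero_le_one
      _ = 1 := by norm_num
  have hexp := Real.abs_exp_sub_one_sub_id_le hxabs
  have hrw : t ^ (s-1) = Real.exp (L * (s-1)) := Real.rpow_def_of_pos ht _
  rw [hrw]
  rw [abs_le] at hexp ⊢
  have hx2 : (L*(s-1))^2 ≤ L^2 := by
    have h1 : (s-1)^2 ≤ 1 := by nlinarith
    nlinarith [mul_le_mul_of_nonneg_left h1 (sq_nonneg L)]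
  have hcross1 : 0 ≤ (s-1) * (L - (t-1)) := by
    have := mul_nonneg (by linarith : (0:ℝ) ≤ 1 - s) hd1
    nlinarith
  have hcross2 : (s-1) * (L - (t-1)) ≤ 2*(t-1)^2 := by
    nlinarith [mul_le_mul_of_nonneg_left hd2 (by linarith : (0:ℝ) ≤ 1 - s),
      mul_nonneg (le_of_lt hs0) hd1, mul_nonneg (le_of_lt hs0) (sq_nonneg (t-1))]
  constructor <;> nlinarith [hexp.1, hexp.2, sq_nonneg (t-1)]

lemma hD_add (c q x : ℝ) (h : 0 < c + x) :
    HasDerivAt (fun t : ℝ => (c + t)^q) (q*(c+x)^(q-1)) x := by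
  have h1 : HasDerivAt (fun t : ℝ => c + t) 1 x := (hasDerivAt_id' x).const_add c
  simpa using h1.rpow_const (Or.inl h.ne')

lemma hD_sub (c q x : ℝ) (h : 0 < c - x) :
    HasDerivAt (fun t : ℝ => (c - t)^q) (-(q*(c-x)^(q-1))) x := by
  have h1 : HasDerivAt (fun t : ℝ => c - t) (-1) x := (hasDerivAt_id' x).const_sub c
  have h2 := h1.rpow_const (p := q) (Or.inl h.ne')
  convert h2 using 1
  ring

lemma hD_sub' (c q x : ℝ) (h : 0 < x - c) :
    HasDerivAt (fun t : ℝ => (t - c)^q) (q*(x-c)^(q-1)) x := by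
  have h1 : HasDerivAt (fun t : ℝ => t - c) 1 x := (hasDerivAt_id' x).sub_const c
  simpa using h1.rpow_const (Or.inl h.ne')

lemma hD_add' (c q x : ℝ) (h : 0 < x + c) :
    HasDerivAt (fun t : ℝ => (t + c)^q) (q*(x+c)^(q-1)) x := by
  have h1 : HasDerivAt (fun t : ℝ => t + c) 1 x := (hasDerivAt_id' x).add_const c
  simpa using h1.rpow_const (Or.inl h.ne')

lemma hG1 (s x : ℝ) (h1 : -1 < x) (h2 : x < 1) :
    HasDerivAt (fun x : ℝ => x^2 - 1/4*(1-x)^(s-1)*x + 1/4*(1+x)^(s-1)*x)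
      (2*x - 1/4*(1-x)^(s-1) + 1/4*(s-1)*(1-x)^(s-1-1)*x + 1/4*(1+x)^(s-1)
        + 1/4*(s-1)*(1+x)^(s-1-1)*x) x := by
  have A := (hD_sub 1 (s-1) x (by linarith)).const_mul (1/4 : ℝ)
  have B := (hD_add 1 (s-1) x (by linarith)).const_mul (1/4 : ℝ)
  have H := ((hasDerivAt_pow 2 x).sub (A.mul (hasDerivAt_id' x))).add (B.mul (hasDerivAt_id' x))
  refine H.congr_deriv ?_
  push_cast
  ring

lemma hG1' (s : ℝ) :
    HasDerivAt (fun x : ℝ => 2*x - 1/4*(1-x)^(s-1) + 1/4*(s-1)*(1-x)^(s-1-1)*x + 1/4*(1+x)^(s-1)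
        + 1/4*(s-1)*(1+x)^(s-1-1)*x) (1 + s) 0 := by
  have A := (hD_sub 1 (s-1) 0 (by norm_num)).const_mul (1/4 : ℝ)
  have B := (hD_add 1 (s-1) 0 (by norm_num)).const_mul (1/4 : ℝ)
  have C := ((hD_sub 1 (s-1-1) 0 (by norm_num)).const_mul (1/4*(s-1) : ℝ)).mul (hasDerivAt_id' 0)
  have D := ((hD_add 1 (s-1-1) 0 (by norm_num)).const_mul (1/4*(s-1) : ℝ)).mul (hasDerivAt_id' 0)
  have H := (((((hasDerivAt_id' (0:ℝ)).const_mul 2).sub A).add C).add B).add D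
  refine H.congr_deriv ?_
  norm_num
  ring

lemma hG3 (s y : ℝ) (h : 0 < y) :
    HasDerivAt (fun y : ℝ => y*(y-1) - y^(s-1)*(y-1))
      (2*y - 1 - ((s-1)*y^(s-1-1)*(y-1) + y^(s-1))) y := by
  have A : HasDerivAt (fun t : ℝ => t ^ (s-1)) ((s-1) * y ^ (s-1-1)) y :=
    Real.hasDerivAt_rpow_const (Or.inl h.ne')
  have H := (((hasDerivAt_id' y).mul ((hasDerivAt_id' y).sub_const 1)).sub
    (A.mul ((hasDerivAt_id' y).sub_const 1)))
  refine H.congr_deriv ?_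
  ring

lemma hG3' (s : ℝ) :
    HasDerivAt (fun y : ℝ => 2*y - 1 - ((s-1)*y^(s-1-1)*(y-1) + y^(s-1))) (4 - 2*s) 1 := by
  have A : HasDerivAt (fun t : ℝ => t ^ (s-1)) ((s-1) * (1:ℝ) ^ (s-1-1)) 1 :=
    Real.hasDerivAt_rpow_const (Or.inl one_ne_zero)
  have B : HasDerivAt (fun t : ℝ => t ^ (s-1-1)) ((s-1-1) * (1:ℝ) ^ (s-1-1-1)) 1 :=
    Real.hasDerivAt_rpow_const (Or.inl one_ne_zero)
  have H := ((((hasDerivAt_id' (1:ℝ)).const_mul 2).sub_const 1).sub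
    (((B.const_mul (s-1)).mul ((hasDerivAt_id' 1).sub_const 1)).add A))
  refine H.congr_deriv ?_
  norm_num [Real.one_rpow]
  ring

lemma hK (s x₁ : ℝ) (ha : -1 < x₁) (hb : x₁ < 1) :
    HasDerivAt (fun x₂ : ℝ => x₁^2 + x₂^2 - 1/4*(1 - x₁ + x₂)^(s-1)*x₁
        - 1/4*(1 + x₁ - x₂)^(s-1)*x₂ - 1/4*(1 + x₁ + x₂)^(s-1)*(-x₁ - x₂))
      (1/4*(s-1)*(1+x₁)^(s-1-1)*x₁ - 1/4*(s-1)*(1-x₁)^(s-1-1)*x₁) 0 := by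
  have A := ((hD_add (1 - x₁) (s-1) 0 (by linarith)).const_mul (1/4 : ℝ)).mul_const x₁
  have B := ((hD_sub (1 + x₁) (s-1) 0 (by linarith)).const_mul (1/4 : ℝ)).mul (hasDerivAt_id' 0)
  have hw := (hD_add (1 + x₁) (s-1) 0 (by linarith)).const_mul (1/4 : ℝ)
  have C := hw.mul (((hasDerivAt_id' (0:ℝ)).neg).sub_const x₁)
  -- shape of C's function: fun y => 1/4*(1+x₁+y)^(s-1) * (-y - x₁)   but we need (-x₁ - y)
  have H := ((((hasDerivAt_const (0:ℝ) (x₁^2)).add ((hasDerivAt_pow 2 (0:ℝ)))).sub A).sub B).sub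
    (hw.mul (((hasDerivAt_id' (0:ℝ)).neg).sub_const x₁))
  have Hfun : (fun x₂ : ℝ => x₁^2 + x₂^2 - 1/4*(1 - x₁ + x₂)^(s-1)*x₁
        - 1/4*(1 + x₁ - x₂)^(s-1)*x₂ - 1/4*(1 + x₁ + x₂)^(s-1)*(-x₁ - x₂))
      = (fun x₂ : ℝ => x₁^2 + x₂^2 - 1/4*(1 - x₁ + x₂)^(s-1)*x₁
        - 1/4*(1 + x₁ - x₂)^(s-1)*x₂ - 1/4*(1 + x₁ + x₂)^(s-1)*(-x₂ - x₁)) := by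
    funext t; ring_nf
  rw [Hfun]
  refine H.congr_deriv ?_
  norm_num
  ring

lemma hPsi (s : ℝ) :
    HasDerivAt (fun x₁ : ℝ => 1/4*(s-1)*(1+x₁)^(s-1-1)*x₁ - 1/4*(s-1)*(1-x₁)^(s-1-1)*x₁)
      0 0 := by
  have A := ((hD_add 1 (s-1-1) 0 (by norm_num)).const_mul (1/4*(s-1) : ℝ)).mul (hasDerivAt_id' 0)
  have B := ((hD_sub 1 (s-1-1) 0 (by norm_num)).const_mul (1/4*(s-1) : ℝ)).mul (hasDerivAt_id' 0)
  have H := A.sub B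
  refine H.congr_deriv ?_
  norm_num

lemma hM (s x₁ : ℝ) (ha : -1 < x₁) (hb : x₁ < 1) :
    HasDerivAt (fun y : ℝ => x₁^2 + y*(y-1) - 1/4*(y - x₁)^(s-1)*(x₁ + y - 1)
        - 1/4*(y + x₁)^(s-1)*(y-1) - 1/4*(y + x₁)^(s-1)*(-x₁ + 2*(y-1)))
      (1 - 1/4*(s-1)*(1-x₁)^(s-1-1)*x₁ - 1/4*(1-x₁)^(s-1) - 3/4*(1+x₁)^(s-1)
        + 1/4*(s-1)*(1+x₁)^(s-1-1)*x₁) 1 := by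
  have A := ((hD_sub' x₁ (s-1) 1 (by linarith)).const_mul (1/4 : ℝ)).mul
    (((hasDerivAt_id' (1:ℝ)).const_add x₁).sub_const 1)
  have B := ((hD_add' x₁ (s-1) 1 (by linarith)).const_mul (1/4 : ℝ)).mul
    ((hasDerivAt_id' (1:ℝ)).sub_const 1)
  have C := ((hD_add' x₁ (s-1) 1 (by linarith)).const_mul (1/4 : ℝ)).mul
    ((((hasDerivAt_id' (1:ℝ)).sub_const 1).const_mul 2).const_add (-x₁))
  have H := ((((hasDerivAt_const (1:ℝ) (x₁^2)).add
      ((hasDerivAt_id' (1:ℝ)).mul ((hasDerivAt_id' (1:ℝ)).sub_const 1))).sub A).sub B).sub C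
  refine H.congr_deriv ?_
  norm_num
  ring

lemma hChi (s : ℝ) :
    HasDerivAt (fun x₁ : ℝ => 1 - 1/4*(s-1)*(1-x₁)^(s-1-1)*x₁ - 1/4*(1-x₁)^(s-1)
        - 3/4*(1+x₁)^(s-1) + 1/4*(s-1)*(1+x₁)^(s-1-1)*x₁) (-(s-1)/2) 0 := by
  have A := ((hD_sub 1 (s-1-1) 0 (by norm_num)).const_mul (1/4*(s-1) : ℝ)).mul (hasDerivAt_id' 0)
  have B := (hD_sub 1 (s-1) 0 (by norm_num)).const_mul (1/4 : ℝ)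
  have C := (hD_add 1 (s-1) 0 (by norm_num)).const_mul (3/4 : ℝ)
  have D := ((hD_add 1 (s-1-1) 0 (by norm_num)).const_mul (1/4*(s-1) : ℝ)).mul (hasDerivAt_id' 0)
  have H := (((((hasDerivAt_const (0:ℝ) 1).sub A).sub B).sub C).add D)
  refine H.congr_deriv ?_
  norm_num
  ring

set_option maxHeartbeats 2000000 in
lemma final_arith (s a b c Eu Ev Ew r : ℝ) (hs0 : 0 < s) (hs1 : s < 1) (hr : r = s/400)
    (hle : a^2+b^2+c^2 ≤ r^2) (hpos : 0 < a^2+b^2+c^2)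
    (hEu : |Eu| ≤ 8*(c-a+b)^2) (hEv : |Ev| ≤ 8*(c+a-b)^2) (hEw : |Ew| ≤ 8*(c+a+b)^2) :
    0 < a^2 + b^2 + (1+c)*c - 1/4*(1+(s-1)*(c-a+b)+Eu)*(a+c)
      - 1/4*(1+(s-1)*(c+a-b)+Ev)*(b+c) - 1/4*(1+(s-1)*(c+a+b)+Ew)*(-a-b+2*c) := by
  subst hr
  have hr0 : (0:ℝ) < s/400 := by positivity
  have ha : |a| ≤ s/400 := by rw [abs_le]; constructor <;> nlinarith
  have hb : |b| ≤ s/400 := by rw [abs_le]; constructor <;> nlinarith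
  have hc : |c| ≤ s/400 := by rw [abs_le]; constructor <;> nlinarith
  rw [abs_le] at ha hb hc
  have hac : |a+c| ≤ 2*(s/400) := by rw [abs_le]; constructor <;> linarith
  have hbc : |b+c| ≤ 2*(s/400) := by rw [abs_le]; constructor <;> linarith
  have hwc : |-a-b+2*c| ≤ 4*(s/400) := by rw [abs_le]; constructor <;> linarith
  have H1 : |Eu*(a+c)| ≤ 8*(c-a+b)^2*(2*(s/400)) := by
    rw [abs_mul]; exact mul_le_mul hEu hac (abs_nonneg _) (by positivity)
  have H2 : |Ev*(b+c)| ≤ 8*(c+a-b)^2*(2*(s/400)) := by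
    rw [abs_mul]; exact mul_le_mul hEv hbc (abs_nonneg _) (by positivity)
  have H3 : |Ew*(-a-b+2*c)| ≤ 8*(c+a+b)^2*(4*(s/400)) := by
    rw [abs_mul]; exact mul_le_mul hEw hwc (abs_nonneg _) (by positivity)
  rw [abs_le] at H1 H2 H3
  have hsq1 : (c-a+b)^2 ≤ 3*(a^2+b^2+c^2) := by nlinarith [sq_nonneg (a+b), sq_nonneg (a+c), sq_nonneg (b-c)]
  have hsq2 : (c+a-b)^2 ≤ 3*(a^2+b^2+c^2) := by nlinarith [sq_nonneg (a+b), sq_nonneg (b+c), sq_nonneg (a-c)]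
  have hsq3 : (c+a+b)^2 ≤ 3*(a^2+b^2+c^2) := by nlinarith [sq_nonneg (a-b), sq_nonneg (b-c), sq_nonneg (a-c)]
  have E1 : -(48*(s/400)*(a^2+b^2+c^2)) ≤ Eu*(a+c) := by
    nlinarith [H1.1, mul_le_mul_of_nonneg_left hsq1 (show (0:ℝ) ≤ 16*(s/400) by positivity)]
  have E2 : -(48*(s/400)*(a^2+b^2+c^2)) ≤ Ev*(b+c) := by
    nlinarith [H2.1, mul_le_mul_of_nonneg_left hsq2 (show (0:ℝ) ≤ 16*(s/400) by positivity)]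
  have E3 : -(96*(s/400)*(a^2+b^2+c^2)) ≤ Ew*(-a-b+2*c) := by
    nlinarith [H3.1, mul_le_mul_of_nonneg_left hsq3 (show (0:ℝ) ≤ 32*(s/400) by positivity)]
  have hQ : s/4*(a^2+b^2+c^2) ≤ (1+s)/2*(a^2+b^2) + (2-s)*c^2 + (1-s)/2*(a+b)*c := by
    nlinarith [mul_nonneg (by linarith : (0:ℝ) ≤ 1-s) (sq_nonneg (a+c)),
      mul_nonneg (by linarith : (0:ℝ) ≤ 1-s) (sq_nonneg (b+c)),
      mul_nonneg hs0.le (sq_nonneg a), mul_nonneg hs0.le (sq_nonneg b),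
      mul_nonneg hs0.le (sq_nonneg c), sq_nonneg a, sq_nonneg b, sq_nonneg c]
  nlinarith [hQ, E1, E2, E3, mul_pos hs0 hpos]

lemma posdef_part (s : ℝ) (hs0 : 0 < s) (hs1 : s < 1) :
    Matrix.PosDef
      !![1 + s, 0, -(s - 1) / 2; 0, 1 + s, -(s - 1) / 2;
         -(s - 1) / 2, -(s - 1) / 2, 4 - 2 * s] := by
  rw [Matrix.posDef_iff_dotProduct_mulVec]
  constructor
  · ext i j
    fin_cases i <;> fin_cases j <;>
      simp [Matrix.conjTranspose_apply]
  · intro x hx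
    have hx' : x 0 ≠ 0 ∨ x 1 ≠ 0 ∨ x 2 ≠ 0 := by
      by_contra h
      push_neg at h
      exact hx (funext fun i => by fin_cases i <;> simp [h.1, h.2.1, h.2.2])
    have expand : dotProduct (star x) ((!![1 + s, 0, -(s - 1) / 2; 0, 1 + s, -(s - 1) / 2;
         -(s - 1) / 2, -(s - 1) / 2, 4 - 2 * s]).mulVec x)
        = (1+s)*(x 0^2 + x 1^2) + (4-2*s)*(x 2^2) + (1-s)*(x 0 + x 1)*(x 2) := by
      simp [dotProduct, Matrix.mulVec, Fin.sum_univ_three]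
      ring
    rw [expand]
    have key : ∀ u v w : ℝ, 0 < u^2 + v^2 + w^2 →
        0 < (1+s)*(u^2 + v^2) + (4-2*s)*(w^2) + (1-s)*(u + v)*w := by
      intro u v w h
      nlinarith [mul_nonneg (by linarith : (0:ℝ) ≤ 1-s) (sq_nonneg (u+w)),
        mul_nonneg (by linarith : (0:ℝ) ≤ 1-s) (sq_nonneg (v+w)),
        mul_nonneg hs0.le (sq_nonneg u), mul_nonneg hs0.le (sq_nonneg v),
        mul_nonneg hs0.le (sq_nonneg w), sq_nonneg u, sq_nonneg v, sq_nonneg w,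
        mul_pos hs0 h]
    apply key
    rcases hx' with h | h | h <;> positivity


set_option maxHeartbeats 2000000 in

theorem stmt_10 (s : ℝ) (hs : s ∈ Set.Ioo (0 : ℝ) 1) (f : ℝ → ℝ → ℝ → ℝ)
    (hf : ∀ x₁ x₂ y : ℝ, f x₁ x₂ y = x₁ ^ 2 + x₂ ^ 2 + y * (y - 1)
      - (1 / 4) * |y - x₁ + x₂| ^ (s - 1) * (x₁ + y - 1)
      - (1 / 4) * |y + x₁ - x₂| ^ (s - 1) * (x₂ + y - 1)
      - (1 / 4) * |y + x₁ + x₂| ^ (s - 1) * (-x₁ - x₂ + 2 * (y - 1))) :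
    f 0 0 1 = 0 ∧
    deriv (fun x => f x 0 1) 0 = 0 ∧
    deriv (fun x => f 0 x 1) 0 = 0 ∧
    deriv (fun y => f 0 0 y) 1 = 0 ∧
    deriv (fun x => deriv (fun x' => f x' 0 1) x) 0 = 1 + s ∧
    deriv (fun x => deriv (fun x' => f 0 x' 1) x) 0 = 1 + s ∧
    deriv (fun y => deriv (fun y' => f 0 0 y') y) 1 = 4 - 2 * s ∧
    deriv (fun x₁ => deriv (fun x₂ => f x₁ x₂ 1) 0) 0 = 0 ∧
    deriv (fun x₁ => deriv (fun y => f x₁ 0 y) 1) 0 = -(s - 1) / 2 ∧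
    deriv (fun x₂ => deriv (fun y => f 0 x₂ y) 1) 0 = -(s - 1) / 2 ∧
    Matrix.PosDef
      !![1 + s, 0, -(s - 1) / 2; 0, 1 + s, -(s - 1) / 2;
         -(s - 1) / 2, -(s - 1) / 2, 4 - 2 * s] ∧
    ∃ r : ℝ, 0 < r ∧ ∀ x₁ x₂ y : ℝ,
      0 < x₁ ^ 2 + x₂ ^ 2 + (y - 1) ^ 2 →
      x₁ ^ 2 + x₂ ^ 2 + (y - 1) ^ 2 ≤ r ^ 2 → f 0 0 1 < f x₁ x₂ y := by
  obtain ⟨hs0, hs1⟩ := hs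
  have h001 : f 0 0 1 = 0 := by rw [hf]; norm_num
  have hsymm : ∀ a y : ℝ, f 0 a y = f a 0 y := by
    intro a y
    rw [hf, hf]
    ring_nf
  have hIa : Set.Ioo (-(1/2):ℝ) (1/2) ∈ nhds (0:ℝ) := Ioo_mem_nhds (by norm_num) (by norm_num)
  -- restriction along x₁
  have hfg1 : ∀ x ∈ Set.Ioo (-(1/2):ℝ) (1/2),
      f x 0 1 = x^2 - 1/4*(1-x)^(s-1)*x + 1/4*(1+x)^(s-1)*x := by
    intro x hx
    rw [hf, show (1:ℝ) - x + 0 = 1 - x by ring, show (1:ℝ) + x - 0 = 1 + x by ring,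
      show (1:ℝ) + x + 0 = 1 + x by ring,
      abs_of_pos (show (0:ℝ) < 1 - x by linarith [hx.2]),
      abs_of_pos (show (0:ℝ) < 1 + x by linarith [hx.1])]
    ring
  have hd1 : ∀ x ∈ Set.Ioo (-(1/2):ℝ) (1/2), deriv (fun x' => f x' 0 1) x =
      2*x - 1/4*(1-x)^(s-1) + 1/4*(s-1)*(1-x)^(s-1-1)*x + 1/4*(1+x)^(s-1)
        + 1/4*(s-1)*(1+x)^(s-1-1)*x := by
    intro x hx
    have hev : (fun x' => f x' 0 1) =ᶠ[nhds x]
        (fun x => x^2 - 1/4*(1-x)^(s-1)*x + 1/4*(1+x)^(s-1)*x) :=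
      Filter.eventuallyEq_of_mem (Ioo_mem_nhds hx.1 hx.2) (fun y hy => hfg1 y hy)
    rw [hev.deriv_eq, (hG1 s x (by linarith [hx.1]) (by linarith [hx.2])).deriv]
  have goal2 : deriv (fun x => f x 0 1) 0 = 0 := by
    rw [hd1 0 ⟨by norm_num, by norm_num⟩]
    norm_num
  have goal5 : deriv (fun x => deriv (fun x' => f x' 0 1) x) 0 = 1 + s := by
    have hev2 : (fun x => deriv (fun x' => f x' 0 1) x) =ᶠ[nhds (0:ℝ)]
        (fun x => 2*x - 1/4*(1-x)^(s-1) + 1/4*(s-1)*(1-x)^(s-1-1)*x + 1/4*(1+x)^(s-1)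
          + 1/4*(s-1)*(1+x)^(s-1-1)*x) :=
      Filter.eventuallyEq_of_mem hIa (fun y hy => hd1 y hy)
    rw [hev2.deriv_eq, (hG1' s).deriv]
  -- x₂ direction via symmetry
  have hswap : (fun x => f 0 x 1) = (fun x => f x 0 1) := funext (fun x => hsymm x 1)
  have goal3 : deriv (fun x => f 0 x 1) 0 = 0 := by rw [hswap]; exact goal2
  have goal6 : deriv (fun x => deriv (fun x' => f 0 x' 1) x) 0 = 1 + s := by
    simp only [hsymm]
    exact goal5
  -- y direction
  have hIy : Set.Ioo (1/2:ℝ) (3/2) ∈ nhds (1:ℝ) := Ioo_mem_nhds (by norm_num) (by norm_num)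
  have hfg3 : ∀ y ∈ Set.Ioo (1/2:ℝ) (3/2), f 0 0 y = y*(y-1) - y^(s-1)*(y-1) := by
    intro y hy
    rw [hf, show y - 0 + 0 = y by ring, show y + 0 - 0 = y by ring,
      show y + 0 + 0 = y by ring, abs_of_pos (show (0:ℝ) < y by linarith [hy.1])]
    ring
  have hd3 : ∀ y ∈ Set.Ioo (1/2:ℝ) (3/2), deriv (fun y' => f 0 0 y') y =
      2*y - 1 - ((s-1)*y^(s-1-1)*(y-1) + y^(s-1)) := by
    intro y hy
    have hev : (fun y' => f 0 0 y') =ᶠ[nhds y] (fun y => y*(y-1) - y^(s-1)*(y-1)) :=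
      Filter.eventuallyEq_of_mem (Ioo_mem_nhds hy.1 hy.2) (fun z hz => hfg3 z hz)
    rw [hev.deriv_eq, (hG3 s y (by linarith [hy.1])).deriv]
  have goal4 : deriv (fun y => f 0 0 y) 1 = 0 := by
    rw [hd3 1 ⟨by norm_num, by norm_num⟩]
    norm_num
  have goal7 : deriv (fun y => deriv (fun y' => f 0 0 y') y) 1 = 4 - 2*s := by
    have hev2 : (fun y => deriv (fun y' => f 0 0 y') y) =ᶠ[nhds (1:ℝ)]
        (fun y => 2*y - 1 - ((s-1)*y^(s-1-1)*(y-1) + y^(s-1))) :=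
      Filter.eventuallyEq_of_mem hIy (fun z hz => hd3 z hz)
    rw [hev2.deriv_eq, (hG3' s).deriv]
  -- mixed x₁ x₂
  have hdK : ∀ x₁ ∈ Set.Ioo (-(1/2):ℝ) (1/2), deriv (fun x₂ => f x₁ x₂ 1) 0 =
      1/4*(s-1)*(1+x₁)^(s-1-1)*x₁ - 1/4*(s-1)*(1-x₁)^(s-1-1)*x₁ := by
    intro x₁ hx
    have hev : (fun x₂ => f x₁ x₂ 1) =ᶠ[nhds (0:ℝ)]
        (fun x₂ : ℝ => x₁^2 + x₂^2 - 1/4*(1 - x₁ + x₂)^(s-1)*x₁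
          - 1/4*(1 + x₁ - x₂)^(s-1)*x₂ - 1/4*(1 + x₁ + x₂)^(s-1)*(-x₁ - x₂)) := by
      refine Filter.eventuallyEq_of_mem (Ioo_mem_nhds (show -(1/4:ℝ) < 0 by norm_num)
        (show (0:ℝ) < 1/4 by norm_num)) (fun x₂ hx₂ => ?_)
    -- EqOn proof
      rw [hf, abs_of_pos (show (0:ℝ) < 1 - x₁ + x₂ by
          obtain ⟨h1, h2⟩ := hx; obtain ⟨h3, h4⟩ := hx₂; linarith),
        abs_of_pos (show (0:ℝ) < 1 + x₁ - x₂ by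
          obtain ⟨h1, h2⟩ := hx; obtain ⟨h3, h4⟩ := hx₂; linarith),
        abs_of_pos (show (0:ℝ) < 1 + x₁ + x₂ by
          obtain ⟨h1, h2⟩ := hx; obtain ⟨h3, h4⟩ := hx₂; linarith)]
      ring
    rw [hev.deriv_eq, (hK s x₁ (by linarith [hx.1]) (by linarith [hx.2])).deriv]
  have goal8 : deriv (fun x₁ => deriv (fun x₂ => f x₁ x₂ 1) 0) 0 = 0 := by
    have hev2 : (fun x₁ => deriv (fun x₂ => f x₁ x₂ 1) 0) =ᶠ[nhds (0:ℝ)]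
        (fun x₁ => 1/4*(s-1)*(1+x₁)^(s-1-1)*x₁ - 1/4*(s-1)*(1-x₁)^(s-1-1)*x₁) :=
      Filter.eventuallyEq_of_mem hIa (fun y hy => hdK y hy)
    rw [hev2.deriv_eq, (hPsi s).deriv]
  -- mixed x₁ y
  have hdM : ∀ x₁ ∈ Set.Ioo (-(1/2):ℝ) (1/2), deriv (fun y => f x₁ 0 y) 1 =
      1 - 1/4*(s-1)*(1-x₁)^(s-1-1)*x₁ - 1/4*(1-x₁)^(s-1) - 3/4*(1+x₁)^(s-1)
        + 1/4*(s-1)*(1+x₁)^(s-1-1)*x₁ := by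
    intro x₁ hx
    have hev : (fun y => f x₁ 0 y) =ᶠ[nhds (1:ℝ)]
        (fun y : ℝ => x₁^2 + y*(y-1) - 1/4*(y - x₁)^(s-1)*(x₁ + y - 1)
          - 1/4*(y + x₁)^(s-1)*(y-1) - 1/4*(y + x₁)^(s-1)*(-x₁ + 2*(y-1))) := by
      refine Filter.eventuallyEq_of_mem (Ioo_mem_nhds (show (3/4:ℝ) < 1 by norm_num)
        (show (1:ℝ) < 5/4 by norm_num)) (fun y hy => ?_)
      rw [hf, show y - x₁ + 0 = y - x₁ by ring, show y + x₁ - 0 = y + x₁ by ring,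
        show y + x₁ + 0 = y + x₁ by ring,
        abs_of_pos (show (0:ℝ) < y - x₁ by
          obtain ⟨h1, h2⟩ := hx; obtain ⟨h3, h4⟩ := hy; linarith),
        abs_of_pos (show (0:ℝ) < y + x₁ by
          obtain ⟨h1, h2⟩ := hx; obtain ⟨h3, h4⟩ := hy; linarith)]
      ring
    rw [hev.deriv_eq, (hM s x₁ (by linarith [hx.1]) (by linarith [hx.2])).deriv]
  have goal9 : deriv (fun x₁ => deriv (fun y => f x₁ 0 y) 1) 0 = -(s-1)/2 := by
    have hev2 : (fun x₁ => deriv (fun y => f x₁ 0 y) 1) =ᶠ[nhds (0:ℝ)]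
        (fun x₁ => 1 - 1/4*(s-1)*(1-x₁)^(s-1-1)*x₁ - 1/4*(1-x₁)^(s-1) - 3/4*(1+x₁)^(s-1)
          + 1/4*(s-1)*(1+x₁)^(s-1-1)*x₁) :=
      Filter.eventuallyEq_of_mem hIa (fun y hy => hdM y hy)
    rw [hev2.deriv_eq, (hChi s).deriv]
  have goal10 : deriv (fun x₂ => deriv (fun y => f 0 x₂ y) 1) 0 = -(s-1)/2 := by
    simp only [hsymm]
    exact goal9
  refine ⟨h001, goal2, goal3, goal4, goal5, goal6, goal7, goal8, goal9, goal10,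
    posdef_part s hs0 hs1, s/400, by positivity, ?_⟩
  -- strict local minimum
  intro x₁ x₂ y hpos hle
  rw [h001]
  have hr0 : (0:ℝ) < s/400 := by positivity
  have hrs : s/400 < 1/400 := by linarith
  have ha : |x₁| ≤ s/400 := by
    rw [abs_le]; constructor <;> nlinarith [sq_nonneg x₂, sq_nonneg (y-1)]
  have hb : |x₂| ≤ s/400 := by
    rw [abs_le]; constructor <;> nlinarith [sq_nonneg x₁, sq_nonneg (y-1)]
  have hc : |y-1| ≤ s/400 := by
    rw [abs_le]; constructor <;> nlinarith [sq_nonneg x₁, sq_nonneg x₂]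
  rw [abs_le] at ha hb hc
  have hu0 : (1/2:ℝ) ≤ y - x₁ + x₂ := by linarith
  have hu1 : y - x₁ + x₂ ≤ 3/2 := by linarith
  have hv0 : (1/2:ℝ) ≤ y + x₁ - x₂ := by linarith
  have hv1 : y + x₁ - x₂ ≤ 3/2 := by linarith
  have hw0 : (1/2:ℝ) ≤ y + x₁ + x₂ := by linarith
  have hw1 : y + x₁ + x₂ ≤ 3/2 := by linarith
  have hEu := key_taylor hs0 hs1 hu0 hu1
  have hEv := key_taylor hs0 hs1 hv0 hv1
  have hEw := key_taylor hs0 hs1 hw0 hw1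
  rw [hf, abs_of_pos (show (0:ℝ) < y - x₁ + x₂ by linarith),
    abs_of_pos (show (0:ℝ) < y + x₁ - x₂ by linarith),
    abs_of_pos (show (0:ℝ) < y + x₁ + x₂ by linarith)]
  have erw1 : (y - x₁ + x₂)^(s-1)
      = 1 + (s-1)*((y-1) - x₁ + x₂) + ((y - x₁ + x₂)^(s-1) - 1 - (s-1)*((y - x₁ + x₂)-1)) := by
    ring
  have erw2 : (y + x₁ - x₂)^(s-1)
      = 1 + (s-1)*((y-1) + x₁ - x₂) + ((y + x₁ - x₂)^(s-1) - 1 - (s-1)*((y + x₁ - x₂)-1)) := by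
    ring
  have erw3 : (y + x₁ + x₂)^(s-1)
      = 1 + (s-1)*((y-1) + x₁ + x₂) + ((y + x₁ + x₂)^(s-1) - 1 - (s-1)*((y + x₁ + x₂)-1)) := by
    ring
  have harith := final_arith s x₁ x₂ (y-1)
    ((y - x₁ + x₂)^(s-1) - 1 - (s-1)*((y - x₁ + x₂)-1))
    ((y + x₁ - x₂)^(s-1) - 1 - (s-1)*((y + x₁ - x₂)-1))
    ((y + x₁ + x₂)^(s-1) - 1 - (s-1)*((y + x₁ + x₂)-1))
    (s/400) hs0 hs1 rfl hle hpos
    (by convert hEu using 3 <;> ring) (by convert hEv using 3 <;> ring)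
    (by convert hEw using 3 <;> ring)
  nlinarith [harith]
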